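/- Let ABCD be a quadrilateral inscribed in a circle ω with center O (A, B, C, D are pairwise distinct points on ω), and let P be the intersection point of the diagonals AC and BD, with P ≠ O. Let the line through P perpendicular to OP meet the line AB at Q and the line CD at R (assume these intersections exist). Then P is the midpoint of the segment QR. -/

import Mathlib

open scoped InnerProductSpace


lemma collinear3_iff (X Y Z : EuclideanSpace ℝ (Fin 2)) :
    Collinear ℝ ({X, Y, Z} : Set (EuclideanSpace ℝ (Fin 2))) ↔
    (Y 0 - X 0) * (Z 1 - X 1) - (Y 1 - X 1) * (Z 0 - X 0) = 0 := by
  rw [collinear_iff_of_mem (Set.mem_insert X {Y, Z})]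
  constructor
  · rintro ⟨v, hv⟩
    obtain ⟨cY, hY⟩ := hv Y (by simp)
    obtain ⟨cZ, hZ⟩ := hv Z (by simp)
    have hY0 : Y 0 = cY * v 0 + X 0 := by rw [hY]; rfl
    have hY1 : Y 1 = cY * v 1 + X 1 := by rw [hY]; rfl
    have hZ0 : Z 0 = cZ * v 0 + X 0 := by rw [hZ]; rfl
    have hZ1 : Z 1 = cZ * v 1 + X 1 := by rw [hZ]; rfl
    rw [hY0, hY1, hZ0, hZ1]; ring
  · intro h
    by_cases hXY : Y = X
    · refine ⟨Z - X, ?_⟩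
      rintro p (rfl | rfl | rfl)
      · exact ⟨0, by simp⟩
      · exact ⟨0, by simp [hXY]⟩
      · refine ⟨1, ?_⟩
        apply PiLp.ext; intro i
        simp [PiLp.sub_apply]
    · refine ⟨Y - X, ?_⟩
      rintro p (rfl | rfl | rfl)
      · exact ⟨0, by simp⟩
      · refine ⟨1, ?_⟩
        apply PiLp.ext; intro i
        simp [PiLp.sub_apply]
      · by_cases h0 : Y 0 - X 0 ≠ 0
        · refine ⟨(p 0 - X 0) / (Y 0 - X 0), ?_⟩
          apply PiLp.ext; intro i
          fin_cases i <;>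
            simp only [PiLp.add_apply, PiLp.smul_apply, PiLp.sub_apply, smul_eq_mul,
              vadd_eq_add, Fin.zero_eta, Fin.mk_one] <;> field_simp <;> nlinarith [h]
        · push_neg at h0
          have h1 : Y 1 - X 1 ≠ 0 := by
            intro h1
            apply hXY
            apply PiLp.ext; intro i
            fin_cases i <;> simp <;> linarith
          refine ⟨(p 1 - X 1) / (Y 1 - X 1), ?_⟩
          apply PiLp.ext; intro i
          fin_cases i <;>
            simp only [PiLp.add_apply, PiLp.smul_apply, PiLp.sub_apply, smul_eq_mul,
              vadd_eq_add, Fin.zero_eta, Fin.mk_one] <;> field_simp <;> nlinarith [h]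


lemma exists_ratio (x0 x1 y0 y1 : ℝ) (h : x0*y1 - x1*y0 = 0) (hx : ¬(x0 = 0 ∧ x1 = 0)) :
    ∃ s, y0 = s*x0 ∧ y1 = s*x1 := by
  rcases not_and_or.mp hx with h0 | h0
  · refine ⟨y0/x0, by field_simp, ?_⟩
    field_simp
    linear_combination h
  · refine ⟨y1/x1, ?_, by field_simp⟩
    field_simp
    linear_combination -h

lemma butterfly_core (u0 u1 a0 a1 b0 b1 c0 c1 d0 d1 q0 q1 e0 e1 r : ℝ)
    (hcA : (a0 - u0)^2 + (a1 - u1)^2 = r^2)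
    (hcB : (b0 - u0)^2 + (b1 - u1)^2 = r^2)
    (hcC : (c0 - u0)^2 + (c1 - u1)^2 = r^2)
    (hcD : (d0 - u0)^2 + (d1 - u1)^2 = r^2)
    (hAB : ¬(a0 = b0 ∧ a1 = b1))
    (hAC : ¬(a0 = c0 ∧ a1 = c1))
    (hBD : ¬(b0 = d0 ∧ b1 = d1))
    (hCD : ¬(c0 = d0 ∧ c1 = d1))
    (hABC : (b0 - a0)*(c1 - a1) - (b1 - a1)*(c0 - a0) ≠ 0)
    (hABD : (b0 - a0)*(d1 - a1) - (b1 - a1)*(d0 - a0) ≠ 0)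
    (hACD : (c0 - a0)*(d1 - a1) - (c1 - a1)*(d0 - a0) ≠ 0)
    (hBCD : (c0 - b0)*(d1 - b1) - (c1 - b1)*(d0 - b0) ≠ 0)
    (hPAC : a0*c1 - a1*c0 = 0)
    (hPBD : b0*d1 - b1*d0 = 0)
    (hu : ¬(u0 = 0 ∧ u1 = 0))
    (hQAB : (b0 - a0)*(q1 - a1) - (b1 - a1)*(q0 - a0) = 0)
    (hyQ : q0*u0 + q1*u1 = 0)
    (hRCD : (d0 - c0)*(e1 - c1) - (d1 - c1)*(e0 - c0) = 0)
    (hyR : e0*u0 + e1*u1 = 0) :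
    q0 + e0 = 0 ∧ q1 + e1 = 0 := by
  have hn' : (u0^2 + u1^2) ≠ 0 := by
    rcases not_and_or.mp hu with h | h <;> positivity
  -- vertices differ from P (origin)
  have haP : ¬(a0 = 0 ∧ a1 = 0) := by
    rintro ⟨h1, h2⟩
    exact hABD (by rw [h1, h2]; linear_combination hPBD)
  have hbP : ¬(b0 = 0 ∧ b1 = 0) := by
    rintro ⟨h1, h2⟩
    exact hABC (by rw [h1, h2]; linear_combination -hPAC)
  have hcP : ¬(c0 = 0 ∧ c1 = 0) := by
    rintro ⟨h1, h2⟩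
    exact hBCD (by rw [h1, h2]; linear_combination -hPBD)
  have hdP : ¬(d0 = 0 ∧ d1 = 0) := by
    rintro ⟨h1, h2⟩
    exact hACD (by rw [h1, h2]; linear_combination hPAC)
  obtain ⟨s, hs0, hs1⟩ := exists_ratio a0 a1 c0 c1 hPAC haP
  obtain ⟨t, ht0, ht1⟩ := exists_ratio b0 b1 d0 d1 hPBD hbP
  subst hs0; subst hs1; subst ht0; subst ht1
  have hs1' : s ≠ 1 := by
    intro h
    exact hAC ⟨by rw [h]; ring, by rw [h]; ring⟩
  have ht1' : t ≠ 1 := by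
    intro h
    exact hBD ⟨by rw [h]; ring, by rw [h]; ring⟩
  have hsne0 : s ≠ 0 := by
    intro h
    exact hcP ⟨by rw [h]; ring, by rw [h]; ring⟩
  have htne0 : t ≠ 0 := by
    intro h
    exact hdP ⟨by rw [h]; ring, by rw [h]; ring⟩
  have hsm : s*(a0^2+a1^2) = (u0^2+u1^2) - r^2 := by
    have key : (s-1)*(s*(a0^2+a1^2) - ((u0^2+u1^2) - r^2)) = 0 := by
      linear_combination hcC - s*hcA
    rcases mul_eq_zero.mp key with h | h
    · exact absurd (by linarith [sub_eq_zero.mp h] : s = 1) hs1'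
    · linarith [sub_eq_zero.mp h]
  have htm : t*(b0^2+b1^2) = (u0^2+u1^2) - r^2 := by
    have key : (t-1)*(t*(b0^2+b1^2) - ((u0^2+u1^2) - r^2)) = 0 := by
      linear_combination hcD - t*hcB
    rcases mul_eq_zero.mp key with h | h
    · exact absurd (by linarith [sub_eq_zero.mp h] : t = 1) ht1'
    · linarith [sub_eq_zero.mp h]
  have hq : (q1*u0 - q0*u1) * ((b0*u0+b1*u1) - (a0*u0+a1*u1))
      = (a1*u0 - a0*u1)*(b0*u0+b1*u1) - (b1*u0 - b0*u1)*(a0*u0+a1*u1) := by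
    linear_combination (u0^2+u1^2)*hQAB + ((b1*u0 - b0*u1) - (a1*u0 - a0*u1))*hyQ
  have hr : (e1*u0 - e0*u1) * (t*(b0*u0+b1*u1) - s*(a0*u0+a1*u1))
      = s*t*((a1*u0 - a0*u1)*(b0*u0+b1*u1) - (b1*u0 - b0*u1)*(a0*u0+a1*u1)) := by
    linear_combination (u0^2+u1^2)*hRCD + (t*(b1*u0 - b0*u1) - s*(a1*u0 - a0*u1))*hyR
  have hyAB : ¬((a0*u0+a1*u1) = 0 ∧ (b0*u0+b1*u1) = 0) := by
    rintro ⟨h1, h2⟩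
    have h3 : (u0^2+u1^2)*(a0*b1 - a1*b0) = 0 := by
      linear_combination (u0*b1 - u1*b0)*h1 + (a0*u1 - a1*u0)*h2
    have hab : a0*b1 - a1*b0 = 0 := (mul_eq_zero.mp h3).resolve_left hn'
    exact hABC (by linear_combination (1 - s)*hab)
  have hba : (b0*u0+b1*u1) - (a0*u0+a1*u1) ≠ 0 := by
    intro h
    have h0 : (a0*u0+a1*u1)*((a1*u0 - a0*u1) - (b1*u0 - b0*u1)) = 0 := by
      linear_combination -hq + ((q1*u0 - q0*u1) - (a1*u0 - a0*u1))*h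
    rcases mul_eq_zero.mp h0 with h1 | h1
    · exact hyAB ⟨h1, by linarith⟩
    · apply hAB
      constructor
      · have h2 : (u0^2+u1^2)*(a0 - b0) = 0 := by
          linear_combination (-u1)*h1 + (-u0)*h
        have := (mul_eq_zero.mp h2).resolve_left hn'
        linarith [sub_eq_zero.mp this]
      · have h2 : (u0^2+u1^2)*(a1 - b1) = 0 := by
          linear_combination u0*h1 + (-u1)*h
        have := (mul_eq_zero.mp h2).resolve_left hn'
        linarith [sub_eq_zero.mp this]
  have hdc : t*(b0*u0+b1*u1) - s*(a0*u0+a1*u1) ≠ 0 := by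
    intro h
    have h0 : (s*(a0*u0+a1*u1))*((s*a1*u0 - s*a0*u1) - (t*b1*u0 - t*b0*u1)) = 0 := by
      linear_combination -hr + ((e1*u0 - e0*u1) - (s*a1*u0 - s*a0*u1))*h
    rcases mul_eq_zero.mp h0 with h1 | h1
    · have hyA : a0*u0+a1*u1 = 0 := by
        rcases mul_eq_zero.mp h1 with h2 | h2
        · exact absurd h2 hsne0
        · exact h2
      have hyB : b0*u0+b1*u1 = 0 := by
        have h3 : t*(b0*u0+b1*u1) = 0 := by linear_combination h + s*hyA
        rcases mul_eq_zero.mp h3 with h2 | h2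
        · exact absurd h2 htne0
        · exact h2
      exact hyAB ⟨hyA, hyB⟩
    · apply hCD
      constructor
      · have h2 : (u0^2+u1^2)*(s*a0 - t*b0) = 0 := by
          linear_combination (-u1)*h1 + (-u0)*h
        have := (mul_eq_zero.mp h2).resolve_left hn'
        linarith [sub_eq_zero.mp this]
      · have h2 : (u0^2+u1^2)*(s*a1 - t*b1) = 0 := by
          linear_combination u0*h1 + (-u1)*h
        have := (mul_eq_zero.mp h2).resolve_left hn'
        linarith [sub_eq_zero.mp this]
  have e5 : (s+1)*(a0^2+a1^2) = 2*(a0*u0+a1*u1) := by linear_combination hsm + hcA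
  have e6 : (t+1)*(b0^2+b1^2) = 2*(b0*u0+b1*u1) := by linear_combination htm + hcB
  have hbr : (t*(b0*u0+b1*u1)*(1+s) - s*(a0*u0+a1*u1)*(1+t)) * ((a0^2+a1^2)*(b0^2+b1^2)) = 0 := by
    linear_combination (t*(b0*u0+b1*u1)*(b0^2+b1^2))*e5 - (s*(a0*u0+a1*u1)*(a0^2+a1^2))*e6
      + (2*(a0*u0+a1*u1)*(b0*u0+b1*u1))*(htm - hsm)
  have hmAne : (a0^2+a1^2) ≠ 0 := by
    rcases not_and_or.mp haP with h | h <;> positivity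
  have hmBne : (b0^2+b1^2) ≠ 0 := by
    rcases not_and_or.mp hbP with h | h <;> positivity
  have hfin : ((q1*u0 - q0*u1) + (e1*u0 - e0*u1)) *
      (((b0*u0+b1*u1) - (a0*u0+a1*u1)) * ((t*(b0*u0+b1*u1) - s*(a0*u0+a1*u1)) *
        ((a0^2+a1^2)*(b0^2+b1^2)))) = 0 := by
    linear_combination ((t*(b0*u0+b1*u1) - s*(a0*u0+a1*u1))*((a0^2+a1^2)*(b0^2+b1^2)))*hq
      + (((b0*u0+b1*u1) - (a0*u0+a1*u1))*((a0^2+a1^2)*(b0^2+b1^2)))*hr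
      + ((a1*u0 - a0*u1)*(b0*u0+b1*u1) - (b1*u0 - b0*u1)*(a0*u0+a1*u1))*hbr
  have hxQR : (q1*u0 - q0*u1) + (e1*u0 - e0*u1) = 0 := by
    rcases mul_eq_zero.mp hfin with h | h
    · exact h
    · rcases mul_eq_zero.mp h with h | h
      · exact absurd h hba
      · rcases mul_eq_zero.mp h with h | h
        · exact absurd h hdc
        · exact absurd h (mul_ne_zero hmAne hmBne)
  constructor
  · have h1 : (u0^2+u1^2)*(q0 + e0) = 0 := by
      linear_combination (-u1)*hxQR + u0*hyQ + u0*hyR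
    exact (mul_eq_zero.mp h1).resolve_left hn'
  · have h2 : (u0^2+u1^2)*(q1 + e1) = 0 := by
      linear_combination u0*hxQR + u1*hyQ + u1*hyR
    exact (mul_eq_zero.mp h2).resolve_left hn'

lemma dist_sq' (X O' : EuclideanSpace ℝ (Fin 2)) (r : ℝ) (h : dist X O' = r) :
    (X 0 - O' 0)^2 + (X 1 - O' 1)^2 = r^2 := by
  rw [← h, EuclideanSpace.dist_eq, Real.sq_sqrt (by positivity), Fin.sum_univ_two]
  simp [Real.dist_eq, sq_abs]

lemma ne_coords {X Y P : EuclideanSpace ℝ (Fin 2)} (h : X ≠ Y) :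
    ¬(X 0 - P 0 = Y 0 - P 0 ∧ X 1 - P 1 = Y 1 - P 1) := by
  rintro ⟨h0, h1⟩
  apply h
  apply PiLp.ext; intro i; fin_cases i
  · show X 0 = Y 0; linarith
  · show X 1 = Y 1; linarith

/-- **Butterfly Theorem for cyclic quadrilateral.** Let `ABCD` be a quadrilateral
inscribed in a circle with center `O` and radius `r`, and let `P` be the intersection
of the diagonals `AC` and `BD`, with `P ≠ O`.  The line through `P` perpendicular to
`OP` meets line `AB` at `Q` and line `CD` at `R`.  Then `P` is the midpoint of `QR`. -/
theorem butterfly_cyclic_quadrilateral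
    (O A B C D P Q R : EuclideanSpace ℝ (Fin 2)) (r : ℝ)
    (hA : dist A O = r) (hB : dist B O = r) (hC : dist C O = r) (hD : dist D O = r)
    (hAB : A ≠ B) (hAC : A ≠ C) (hAD : A ≠ D) (hBC : B ≠ C) (hBD : B ≠ D) (hCD : C ≠ D)
    (hABC : ¬ Collinear ℝ ({A, B, C} : Set (EuclideanSpace ℝ (Fin 2))))
    (hABD : ¬ Collinear ℝ ({A, B, D} : Set (EuclideanSpace ℝ (Fin 2))))
    (hACD : ¬ Collinear ℝ ({A, C, D} : Set (EuclideanSpace ℝ (Fin 2))))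
    (hBCD : ¬ Collinear ℝ ({B, C, D} : Set (EuclideanSpace ℝ (Fin 2))))
    (hPAC : Collinear ℝ ({A, C, P} : Set (EuclideanSpace ℝ (Fin 2))))
    (hPBD : Collinear ℝ ({B, D, P} : Set (EuclideanSpace ℝ (Fin 2))))
    (hPO : P ≠ O)
    (hQAB : Collinear ℝ ({A, B, Q} : Set (EuclideanSpace ℝ (Fin 2))))
    (hQperp : ⟪Q - P, O - P⟫_ℝ = 0)
    (hRCD : Collinear ℝ ({C, D, R} : Set (EuclideanSpace ℝ (Fin 2))))
    (hRperp : ⟪R - P, O - P⟫_ℝ = 0) :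
    P = midpoint ℝ Q R := by
  rw [collinear3_iff] at hPAC hPBD hQAB hRCD
  simp only [PiLp.inner_apply, Fin.sum_univ_two, RCLike.inner_apply, conj_trivial,
    PiLp.sub_apply] at hQperp hRperp
  have key := butterfly_core (O 0 - P 0) (O 1 - P 1) (A 0 - P 0) (A 1 - P 1)
    (B 0 - P 0) (B 1 - P 1) (C 0 - P 0) (C 1 - P 1) (D 0 - P 0) (D 1 - P 1)
    (Q 0 - P 0) (Q 1 - P 1) (R 0 - P 0) (R 1 - P 1) r
    (by linear_combination dist_sq' A O r hA)
    (by linear_combination dist_sq' B O r hB)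
    (by linear_combination dist_sq' C O r hC)
    (by linear_combination dist_sq' D O r hD)
    (ne_coords hAB) (ne_coords hAC) (ne_coords hBD) (ne_coords hCD)
    (fun h => hABC ((collinear3_iff A B C).mpr (by linear_combination h)))
    (fun h => hABD ((collinear3_iff A B D).mpr (by linear_combination h)))
    (fun h => hACD ((collinear3_iff A C D).mpr (by linear_combination h)))
    (fun h => hBCD ((collinear3_iff B C D).mpr (by linear_combination h)))
    (by linear_combination hPAC)
    (by linear_combination hPBD)
    (by
      rintro ⟨h0, h1⟩
      apply hPO
      apply PiLp.ext; intro i; fin_cases i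
      · show P 0 = O 0; linarith
      · show P 1 = O 1; linarith)
    (by linear_combination hQAB)
    (by linear_combination hQperp)
    (by linear_combination hRCD)
    (by linear_combination hRperp)
  obtain ⟨h0, h1⟩ := key
  apply PiLp.ext; intro i; fin_cases i
  · show P 0 = midpoint ℝ Q R 0
    have : (midpoint ℝ Q R) 0 = (Q 0 + R 0)/2 := by simp [midpoint_eq_smul_add]; ring
    rw [this]; linarith
  · show P 1 = midpoint ℝ Q R 1
    have : (midpoint ℝ Q R) 1 = (Q 1 + R 1)/2 := by simp [midpoint_eq_smul_add]; ring
    rw [this]; linarith
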